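/- For r ≥ 2, the outer mutual-visibility number of the glued binary tree GT(r) equals 2^r, and the set of quasi-leaves is the unique maximum outer mutual-visibility set. -/

import Mathlib

open SimpleGraph



open SimpleGraph

/-- Two vertices `u` and `v` are `S`-visible: there exists a shortest `u,v`-path
whose intersection with `S` is contained in `{u, v}`. -/
def isVisible {V : Type*} (G : SimpleGraph V) (S : Set V) (u v : V) : Prop :=
  ∃ p : G.Walk u v, p.IsPath ∧ p.length = G.dist u v ∧
    ∀ w ∈ p.support, w ∈ S → w = u ∨ w = v

/-- Two vertices `u` and `v` are `S`-positionable: every shortest `u,v`-path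
has its intersection with `S` contained in `{u, v}`. -/
def isPositionable {V : Type*} (G : SimpleGraph V) (S : Set V) (u v : V) : Prop :=
  ∀ p : G.Walk u v, p.IsPath → p.length = G.dist u v →
    ∀ w ∈ p.support, w ∈ S → w = u ∨ w = v

def isMVSet {V : Type*} (G : SimpleGraph V) (S : Set V) : Prop :=
  ∀ u ∈ S, ∀ v ∈ S, isVisible G S u v

def isOuterMVSet {V : Type*} (G : SimpleGraph V) (S : Set V) : Prop :=
  isMVSet G S ∧ ∀ u ∈ S, ∀ v ∉ S, isVisible G S u v

def isDualMVSet {V : Type*} (G : SimpleGraph V) (S : Set V) : Prop :=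
  isMVSet G S ∧ ∀ u ∉ S, ∀ v ∉ S, isVisible G S u v

def isTotalMVSet {V : Type*} (G : SimpleGraph V) (S : Set V) : Prop :=
  ∀ u v : V, isVisible G S u v

def isGPSet {V : Type*} (G : SimpleGraph V) (S : Set V) : Prop :=
  ∀ u ∈ S, ∀ v ∈ S, isPositionable G S u v

def isOuterGPSet {V : Type*} (G : SimpleGraph V) (S : Set V) : Prop :=
  isGPSet G S ∧ ∀ u ∈ S, ∀ v ∉ S, isPositionable G S u v

def isDualGPSet {V : Type*} (G : SimpleGraph V) (S : Set V) : Prop :=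
  isGPSet G S ∧ ∀ u ∉ S, ∀ v ∉ S, isPositionable G S u v

def isTotalGPSet {V : Type*} (G : SimpleGraph V) (S : Set V) : Prop :=
  ∀ u v : V, isPositionable G S u v

/-- Vertices of the generalized glued `t`-ary tree obtained from `n` copies of
the perfect `t`-ary tree of depth `r`: an internal vertex of copy `i` is encoded
as the list of child-choices from the root (length `< r`), and a quasi-leaf
(identified leaf) is encoded as such a list of length exactly `r`. -/
abbrev gluedVert (r n t : ℕ) : Type :=
  (Fin n × {l : List (Fin t) // l.length < r}) ⊕ {l : List (Fin t) // l.length = r}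

def gluedAdj (r n t : ℕ) : gluedVert r n t → gluedVert r n t → Prop
  | Sum.inl (i, s), Sum.inl (j, s') => i = j ∧ ∃ b, s'.val = s.val ++ [b]
  | Sum.inl (_, s), Sum.inr l => ∃ b, l.val = s.val ++ [b]
  | Sum.inr _, _ => False

/-- The generalized glued `t`-ary tree on `n` copies of the perfect `t`-ary tree
of depth `r`.  `gluedTree r 2 2` is the glued binary tree `GT(r)`,
`gluedTree r 2 t` is the glued `t`-ary tree `GT(r,t)`, and `gluedTree r n 2`
is the generalized glued binary tree `GT_r^(n)`. -/
def gluedTree (r n t : ℕ) : SimpleGraph (gluedVert r n t) :=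
  SimpleGraph.fromRel (gluedAdj r n t)

/-- The set of quasi-leaves. -/
def quasiLeaves (r n t : ℕ) : Set (gluedVert r n t) := {x | ∃ l, x = Sum.inr l}

/-- The vertex set of the `i`-th copy `T_r^(i)` of the perfect `t`-ary tree
(its internal vertices together with all quasi-leaves). -/
def copySet (r n t : ℕ) (i : Fin n) : Set (gluedVert r n t) :=
  {x | (∃ s, x = Sum.inl (i, s)) ∨ x ∈ quasiLeaves r n t}



namespace GTaux

abbrev Str := List (Fin 2)

def lcp : Str → Str → Str
  | x::a, y::b => if x = y then x :: lcp a b else []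
  | _, _ => []

@[simp] lemma lcp_self (a : Str) : lcp a a = a := by
  induction a with
  | nil => rfl
  | cons x a ih => simp [lcp, ih]

lemma lcp_prefix_left : ∀ a b : Str, lcp a b <+: a
  | [], _ => by simp [lcp]
  | x::a, [] => by simp [lcp]
  | x::a, y::b => by
    by_cases h : x = y
    · simpa [lcp, h] using lcp_prefix_left a b
    · simp [lcp, h]

lemma lcp_prefix_right : ∀ a b : Str, lcp a b <+: b
  | [], _ => by simp [lcp]
  | x::a, [] => by simp [lcp]
  | x::a, y::b => by
    by_cases h : x = y
    · subst h; simpa [lcp] using lcp_prefix_right a b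
    · simp [lcp, h]

lemma prefix_lcp : ∀ {c a b : Str}, c <+: a → c <+: b → c <+: lcp a b
  | [], _, _, _, _ => by simp
  | z::c, x::a, y::b, h1, h2 => by
    obtain ⟨hz1, h1'⟩ := by simpa using (List.cons_prefix_cons.mp h1)
    obtain ⟨hz2, h2'⟩ := by simpa using (List.cons_prefix_cons.mp h2)
    subst hz1; subst hz2
    simp only [lcp, if_pos rfl]
    exact List.cons_prefix_cons.mpr ⟨rfl, prefix_lcp h1' h2'⟩
  | z::c, [], _, h1, _ => by simp at h1
  | z::c, _::_, [], _, h2 => by simp at h2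


lemma prefix_antisymm {a b : Str} (h1 : a <+: b) (h2 : b <+: a) : a = b :=
  h1.eq_of_length_le h2.length_le

lemma prefix_snoc {c a : Str} {x : Fin 2} (h : c <+: a ++ [x]) : c <+: a ∨ c = a ++ [x] := by
  rcases le_or_gt c.length a.length with hl | hl
  · exact Or.inl (List.prefix_of_prefix_length_le h (List.prefix_append a [x]) hl)
  · refine Or.inr (h.eq_of_length (le_antisymm h.length_le ?_))
    simp; omega

lemma lcp_snoc (a b : Str) (x : Fin 2) :
    lcp (a++[x]) b = lcp a b ∨ (lcp a b = a ∧ lcp (a++[x]) b = a ++ [x]) := by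
  rcases prefix_snoc (lcp_prefix_left (a++[x]) b) with h | h
  · refine Or.inl (prefix_antisymm ?_ ?_)
    · exact prefix_lcp h (lcp_prefix_right _ b)
    · exact prefix_lcp ((lcp_prefix_left a b).trans (List.prefix_append a [x]))
        (lcp_prefix_right a b)
  · have hab : a ++ [x] <+: b := h ▸ lcp_prefix_right (a++[x]) b
    have h1 : a <+: lcp a b :=
      prefix_lcp (List.prefix_rfl) ((List.prefix_append a [x]).trans hab)
    exact Or.inr ⟨prefix_antisymm (lcp_prefix_left a b) h1, h⟩

def D (a b : Str) : ℕ :=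
  (a.length - (lcp a b).length) + (b.length - (lcp a b).length)

@[simp] lemma D_self (a : Str) : D a a = 0 := by simp [D]

lemma D_lip₁ (a b : Str) (x : Fin 2) : D a b ≤ D (a++[x]) b + 1 := by
  have h1 := (lcp_prefix_left a b).length_le
  have h2 := (lcp_prefix_left (a++[x]) b).length_le
  rcases lcp_snoc a b x with h | ⟨ha, hb⟩
  · simp only [D, h]; simp at h2 ⊢; omega
  · have hab : a ++ [x] <+: b := hb ▸ lcp_prefix_right (a++[x]) b
    have := hab.length_le
    simp only [D, ha, hb]; simp at this ⊢; omega

lemma D_lip₂ (a b : Str) (x : Fin 2) : D (a++[x]) b ≤ D a b + 1 := by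
  have h1 := (lcp_prefix_left a b).length_le
  have h2 := (lcp_prefix_left (a++[x]) b).length_le
  rcases lcp_snoc a b x with h | ⟨ha, hb⟩
  · simp only [D, h]; simp at h2 ⊢; omega
  · have hab : a ++ [x] <+: b := hb ▸ lcp_prefix_right (a++[x]) b
    have := hab.length_le
    simp only [D, ha, hb]; simp at this ⊢; omega

/-- membership in the geodesic between `a` and `b` in the prefix tree -/

lemma lcp_comm : ∀ a b : Str, lcp a b = lcp b a
  | [], [] => rfl
  | [], _ :: _ => rfl
  | _ :: _, [] => rfl
  | x :: a, y :: b => by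
    by_cases h : x = y
    · subst h; simp [lcp, lcp_comm a b]
    · simp [lcp, h, mt Eq.symm h]

lemma D_comm (a b : Str) : D a b = D b a := by rw [D, D, lcp_comm]; omega

def geoMem (a b c : Str) : Prop := lcp a b <+: c ∧ (c <+: a ∨ c <+: b)

lemma geoMem_left (a b : Str) : geoMem a b a := ⟨lcp_prefix_left a b, Or.inl List.prefix_rfl⟩
lemma geoMem_right (a b : Str) : geoMem a b b := ⟨lcp_prefix_right a b, Or.inr List.prefix_rfl⟩

lemma geoMem_self {a c : Str} (h : geoMem a a c) : c = a := by
  obtain ⟨h1, h2⟩ := h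
  rw [lcp_self] at h1
  rcases h2 with h2 | h2 <;> exact prefix_antisymm h2 h1

lemma geoMem_step {a a' b c : Str}
    (hnb : (∃ x, a' = a ++ [x]) ∨ (∃ x, a = a' ++ [x]))
    (h : geoMem a b c) (hc : c ≠ a) : geoMem a' b c := by
  obtain ⟨h1, h2⟩ := h
  rcases hnb with ⟨x, rfl⟩ | ⟨x, rfl⟩
  · -- a' = a ++ [x], child step
    rcases lcp_snoc a b x with hm | ⟨hm1, hm2⟩
    · refine ⟨hm ▸ h1, ?_⟩
      rcases h2 with h2 | h2
      · exact Or.inl (h2.trans (List.prefix_append a [x]))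
      · exact Or.inr h2
    · -- lcp a b = a, lcp (a++[x]) b = a++[x]
      have hcb : c <+: b := by
        rcases h2 with h2 | h2
        · exact absurd (prefix_antisymm h2 (hm1 ▸ h1)) hc
        · exact h2
      have hax : a ++ [x] <+: b := hm2 ▸ lcp_prefix_right _ b
      have hgoal : a ++ [x] <+: c := by
        rcases List.prefix_or_prefix_of_prefix hax hcb with hh | hh
        · exact hh
        · rcases prefix_snoc hh with hh' | rfl
          · exact absurd (prefix_antisymm hh' (hm1 ▸ h1)) hc
          · exact List.prefix_rfl
      exact ⟨by rw [hm2]; exact hgoal, Or.inr hcb⟩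
  · -- a = a' ++ [x], parent step
    rcases lcp_snoc a' b x with hm | ⟨hm1, hm2⟩
    · refine ⟨hm ▸ h1, ?_⟩
      rcases h2 with h2 | h2
      · rcases prefix_snoc h2 with h2' | rfl
        · exact Or.inl h2'
        · exact absurd rfl hc
      · exact Or.inr h2
    · -- lcp a' b = a', lcp (a'++[x]) b = a'++[x] = lcp a b
      have hcb : c <+: b := by
        rcases h2 with h2 | h2
        · exact absurd (prefix_antisymm h2 (hm2 ▸ h1)) hc
        · exact h2
      have h1' : a' ++ [x] <+: c := by rw [← hm2]; exact h1
      exact ⟨by rw [hm1]; exact (List.prefix_append a' [x]).trans h1', Or.inr hcb⟩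


/-- ascending chain of prefixes from `m` to `m ++ e` -/
def chain (m : Str) : Str → List Str
  | [] => [m]
  | x :: e => m :: chain (m ++ [x]) e

lemma mem_chain : ∀ {e m c : Str}, c ∈ chain m e ↔ (m <+: c ∧ c <+: m ++ e)
  | [], m, c => by
    simp only [chain, List.mem_singleton, List.append_nil]
    constructor
    · rintro rfl; exact ⟨List.prefix_rfl, List.prefix_rfl⟩
    · rintro ⟨h1, h2⟩; exact prefix_antisymm h2 h1
  | x :: e, m, c => by
    simp only [chain, List.mem_cons]
    constructor
    · rintro (rfl | h)
      · exact ⟨List.prefix_rfl, List.prefix_append _ _⟩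
      · obtain ⟨h1, h2⟩ := mem_chain.mp h
        refine ⟨(List.prefix_append m [x]).trans h1, ?_⟩
        simpa using h2
    · rintro ⟨h1, h2⟩
      by_cases hc : c = m
      · exact Or.inl hc
      · refine Or.inr (mem_chain.mpr ⟨?_, by simpa using h2⟩)
        have h2' : c <+: (m ++ [x]) ++ e := by simpa using h2
        rcases List.prefix_or_prefix_of_prefix h2' (List.prefix_append (m ++ [x]) e)
          with hh | hh
        · rcases prefix_snoc hh with hh' | rfl
          · exact absurd (prefix_antisymm hh' h1) hc
          · exact List.prefix_rfl
        · exact hh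

lemma chain_length : ∀ (e m : Str), (chain m e).length = e.length + 1
  | [], m => rfl
  | x :: e, m => by simp [chain, chain_length e]

lemma chain_nodup : ∀ (e m : Str), (chain m e).Nodup
  | [], m => List.nodup_singleton m
  | x :: e, m => by
    simp only [chain, List.nodup_cons]
    refine ⟨fun hmem => ?_, chain_nodup e (m ++ [x])⟩
    have := (mem_chain.mp hmem).1.length_le
    simp at this
  
lemma mem_chain_tail {e m c : Str} (h : c ∈ (chain m e).tail) :
    m <+: c ∧ c <+: m ++ e ∧ c ≠ m := by
  cases e with
  | nil => simp [chain] at h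
  | cons x e =>
    simp only [chain, List.tail_cons] at h
    obtain ⟨h1, h2⟩ := mem_chain.mp h
    have hlen := h1.length_le
    simp only [List.length_append, List.length_singleton] at hlen
    refine ⟨(List.prefix_append m [x]).trans h1, by simpa using h2, fun hc => ?_⟩
    subst hc; omega

lemma mem_chain_tail_iff {e m c : Str} :
    c ∈ (chain m e).tail ↔ (m <+: c ∧ c <+: m ++ e ∧ c ≠ m) := by
  refine ⟨mem_chain_tail, fun ⟨h1, h2, h3⟩ => ?_⟩
  cases e with
  | nil => exact absurd (prefix_antisymm (by simpa using h2) h1) h3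
  | cons x e =>
    simp only [chain, List.tail_cons]
    refine mem_chain.mpr ⟨?_, by simpa using h2⟩
    have h2' : c <+: (m ++ [x]) ++ e := by simpa using h2
    rcases List.prefix_or_prefix_of_prefix h2' (List.prefix_append (m ++ [x]) e)
      with hh | hh
    · rcases prefix_snoc hh with hh' | rfl
      · exact absurd (prefix_antisymm hh' h1) h3
      · exact List.prefix_rfl
    · exact hh

/-- the geodesic between `a` and `b` in the prefix tree, as a list -/
def geoList (a b : Str) : List Str :=
  (chain (lcp a b) (a.drop (lcp a b).length)).reverse ++
    (chain (lcp a b) (b.drop (lcp a b).length)).tail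

lemma lcp_append_drop_left (a b : Str) : lcp a b ++ a.drop (lcp a b).length = a :=
  List.prefix_iff_eq_append.mp (lcp_prefix_left a b)

lemma lcp_append_drop_right (a b : Str) : lcp a b ++ b.drop (lcp a b).length = b :=
  List.prefix_iff_eq_append.mp (lcp_prefix_right a b)

lemma mem_geoList_iff {a b c : Str} : c ∈ geoList a b ↔ geoMem a b c := by
  simp only [geoList, List.mem_append, List.mem_reverse, mem_chain,
    lcp_append_drop_left, mem_chain_tail_iff, lcp_append_drop_right]
  constructor
  · rintro (⟨h1, h2⟩ | ⟨h1, h2, _⟩)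
    · exact ⟨h1, Or.inl h2⟩
    · exact ⟨h1, Or.inr h2⟩
  · rintro ⟨h1, h2 | h2⟩
    · exact Or.inl ⟨h1, h2⟩
    · by_cases hc : c = lcp a b
      · subst hc; exact Or.inl ⟨List.prefix_rfl, lcp_prefix_left a b⟩
      · exact Or.inr ⟨h1, h2, hc⟩

lemma geoList_length {a b : Str} : (geoList a b).length = D a b + 1 := by
  have h1 := congrArg List.length (lcp_append_drop_left a b)
  have h2 := congrArg List.length (lcp_append_drop_right a b)
  simp only [List.length_append] at h1 h2
  simp only [geoList, List.length_append, List.length_reverse, List.length_tail,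
    chain_length, D]
  omega

lemma geoList_nodup {a b : Str} : (geoList a b).Nodup := by
  rw [geoList, List.nodup_append]
  refine ⟨by simpa using chain_nodup _ _, (List.tail_sublist _).nodup (chain_nodup _ _), fun c hc c' hc' hcc => ?_⟩
  subst hcc
  rw [List.mem_reverse, mem_chain, lcp_append_drop_left] at hc
  obtain ⟨h1, h2, h3⟩ := mem_chain_tail hc'
  rw [lcp_append_drop_right] at h2
  exact h3 (prefix_antisymm (prefix_lcp hc.2 h2) hc.1)

end GTaux

namespace GTaux
variable {r : ℕ}

abbrev V (r : ℕ) := gluedVert r 2 2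
abbrev GT (r : ℕ) : SimpleGraph (V r) := gluedTree r 2 2

def str : V r → Str
  | Sum.inl (_, s) => s.val
  | Sum.inr l => l.val

@[simp] lemma str_inl (i : Fin 2) (s : {l : Str // l.length < r}) :
    str (Sum.inl (i, s) : V r) = s.val := rfl
@[simp] lemma str_inr (l : {l : Str // l.length = r}) : str (Sum.inr l : V r) = l.val := rfl

lemma str_length_le : ∀ u : V r, (str u).length ≤ r
  | Sum.inl (_, s) => le_of_lt s.2
  | Sum.inr l => le_of_eq l.2

lemma adj_str {u v : V r} (h : (GT r).Adj u v) :
    (∃ x, str v = str u ++ [x]) ∨ (∃ x, str u = str v ++ [x]) := by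
  rw [show GT r = gluedTree r 2 2 from rfl, gluedTree, SimpleGraph.fromRel_adj] at h
  rcases h.2 with h' | h'
  · rcases u with ⟨i, s⟩ | l <;> rcases v with ⟨j, t⟩ | m <;>
      simp [gluedAdj] at h' <;> [exact Or.inl (h'.2.elim (fun h => ⟨0, h⟩) (fun h => ⟨1, h⟩)); exact Or.inl (h'.elim (fun h => ⟨0, h⟩) (fun h => ⟨1, h⟩))]
  · rcases u with ⟨i, s⟩ | l <;> rcases v with ⟨j, t⟩ | m <;>
      simp [gluedAdj] at h' <;> [exact Or.inr (h'.2.elim (fun h => ⟨0, h⟩) (fun h => ⟨1, h⟩)); exact Or.inr (h'.elim (fun h => ⟨0, h⟩) (fun h => ⟨1, h⟩))]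

lemma adj_copy {i j : Fin 2} {s t : {l : Str // l.length < r}}
    (h : (GT r).Adj (Sum.inl (i, s)) (Sum.inl (j, t))) : i = j := by
  rw [show GT r = gluedTree r 2 2 from rfl, gluedTree, SimpleGraph.fromRel_adj] at h
  rcases h.2 with h' | h' <;> simp [gluedAdj] at h'
  exacts [h'.1, h'.1.symm]

lemma walk_lb {u v : V r} (p : (GT r).Walk u v) : D (str u) (str v) ≤ p.length := by
  induction p with
  | nil => simp
  | @cons a b c h q ih =>
    rw [Walk.length_cons]
    rcases adj_str h with ⟨x, hx⟩ | ⟨x, hx⟩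
    · have h1 : D (str a) (str c) ≤ D (str a ++ [x]) (str c) + 1 := D_lip₁ _ _ _
      rw [← hx] at h1
      omega
    · have h1 : D (str b ++ [x]) (str c) ≤ D (str b) (str c) + 1 := D_lip₂ _ _ _
      rw [← hx] at h1
      omega

lemma adj_down {i : Fin 2} {s t : {l : Str // l.length < r}} (x : Fin 2)
    (h : t.val = s.val ++ [x]) : (GT r).Adj (Sum.inl (i, s)) (Sum.inl (i, t)) := by
  rw [show GT r = gluedTree r 2 2 from rfl, gluedTree, SimpleGraph.fromRel_adj]
  refine ⟨fun hc => ?_, Or.inl ⟨rfl, x, h⟩⟩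
  have := congrArg str hc
  simp only [str_inl] at this
  rw [h] at this
  simp at this

lemma adj_leaf {i : Fin 2} {s : {l : Str // l.length < r}} {l : {l : Str // l.length = r}}
    (x : Fin 2) (h : l.val = s.val ++ [x]) :
    (GT r).Adj (Sum.inl (i, s)) (Sum.inr l) := by
  rw [show GT r = gluedTree r 2 2 from rfl, gluedTree, SimpleGraph.fromRel_adj]
  exact ⟨fun hc => by simp at hc, Or.inl ⟨x, h⟩⟩

def downW (i : Fin 2) : (c e : Str) → (hc : c.length < r) → (h : (c ++ e).length < r) →
    (GT r).Walk (Sum.inl (i, ⟨c, hc⟩)) (Sum.inl (i, ⟨c ++ e, h⟩))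
  | c, [], hc, h => Walk.nil.copy rfl (by simp)
  | c, x :: e, hc, h =>
    (Walk.cons
      (adj_down (s := ⟨c, hc⟩) (t := ⟨c ++ [x], by simp at h ⊢; omega⟩) x rfl)
      (downW i (c ++ [x]) e (by simp at h ⊢; omega) (by simpa using h))).copy rfl (by simp)

lemma downW_length (i : Fin 2) : ∀ (e c : Str) (hc : c.length < r) (h : (c ++ e).length < r),
    (downW i c e hc h).length = e.length
  | [], c, hc, h => by simp [downW]
  | x :: e, c, hc, h => by simp [downW, downW_length i e]

lemma downW_support (i : Fin 2) : ∀ (e c : Str) (hc : c.length < r) (h : (c ++ e).length < r)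
    (w : V r), w ∈ (downW i c e hc h).support → ∃ a, w = Sum.inl a
  | [], c, hc, h, w => by
    intro hw
    simp only [downW, Walk.support_copy, Walk.support_nil, List.mem_singleton] at hw
    exact ⟨_, hw⟩
  | x :: e, c, hc, h, w => by
    intro hw
    simp only [downW, Walk.support_copy, Walk.support_cons, List.mem_cons] at hw
    rcases hw with rfl | hw
    · exact ⟨_, rfl⟩
    · exact downW_support i e _ _ _ w hw

def downLW (i : Fin 2) : (c e : Str) → (hc : c.length < r) → (h : (c ++ e).length = r) →
    (GT r).Walk (Sum.inl (i, ⟨c, hc⟩)) (Sum.inr ⟨c ++ e, h⟩)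
  | c, [], hc, h => absurd h (by simp; omega)
  | c, [x], hc, h => Walk.cons (adj_leaf (l := ⟨c ++ [x], h⟩) x rfl) Walk.nil
  | c, x :: y :: e, hc, h =>
    (Walk.cons
      (adj_down (s := ⟨c, hc⟩) (t := ⟨c ++ [x], by simp at h ⊢; omega⟩) x rfl)
      (downLW i (c ++ [x]) (y :: e) (by simp at h ⊢; omega) (by simp at h ⊢; omega))).copy
      rfl (by simp)

lemma downLW_length (i : Fin 2) : ∀ (e c : Str) (hc : c.length < r) (h : (c ++ e).length = r),
    (downLW i c e hc h).length = e.length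
  | [], c, hc, h => absurd h (by simp; omega)
  | [x], c, hc, h => by simp [downLW]
  | x :: y :: e, c, hc, h => by simp [downLW, downLW_length i (y :: e)]

lemma downLW_support (i : Fin 2) : ∀ (e c : Str) (hc : c.length < r) (h : (c ++ e).length = r)
    (w : V r), w ∈ (downLW i c e hc h).support →
      (∃ a, w = Sum.inl a) ∨ w = Sum.inr ⟨c ++ e, h⟩
  | [], c, hc, h, w => absurd h (by simp; omega)
  | [x], c, hc, h, w => by
    intro hw
    simp only [downLW, Walk.support_cons, Walk.support_nil, List.mem_cons,
      List.mem_singleton] at hw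
    rcases hw with rfl | rfl | hw
    · exact Or.inl ⟨_, rfl⟩
    · exact Or.inr rfl
    · simp at hw
  | x :: y :: e, c, hc, h, w => by
    intro hw
    simp only [downLW, Walk.support_copy, Walk.support_cons, List.mem_cons] at hw
    rcases hw with rfl | hw
    · exact Or.inl ⟨_, rfl⟩
    · rcases downLW_support i (y :: e) _ _ _ w hw with h' | h'
      · exact Or.inl h'
      · refine Or.inr (by rw [h']; congr 1; exact Subtype.ext (by simp))


lemma walk_split_li (i : Fin 2) (m ea et : Str) (hm : m.length < r)
    (ha2 : (m ++ ea).length = r) (ht2 : (m ++ et).length < r) :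
    ∃ p : (GT r).Walk (Sum.inr ⟨m ++ ea, ha2⟩) (Sum.inl (i, ⟨m ++ et, ht2⟩)),
      p.length = ea.length + et.length ∧
      ∀ w ∈ p.support, ∀ b : {l : Str // l.length = r}, w = Sum.inr b → b.val = m ++ ea := by
  refine ⟨(downLW i m ea hm ha2).reverse.append (downW i m et hm ht2), ?_, ?_⟩
  · rw [Walk.length_append, Walk.length_reverse, downLW_length, downW_length]
  · intro w hw b hwb
    rw [Walk.mem_support_append_iff] at hw
    rcases hw with hw | hw
    · rw [Walk.support_reverse, List.mem_reverse] at hw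
      rcases downLW_support i _ _ _ _ w hw with ⟨a', ha'⟩ | h'
      · rw [hwb] at ha'; simp at ha'
      · rw [hwb] at h'
        have := congrArg str h'; simpa using this
    · rcases downW_support i _ _ _ _ w hw with ⟨a', ha'⟩
      rw [hwb] at ha'; simp at ha'

lemma walk_split_ll (m ea eb : Str) (hm : m.length < r)
    (ha2 : (m ++ ea).length = r) (hb2 : (m ++ eb).length = r) :
    ∃ p : (GT r).Walk (Sum.inr ⟨m ++ ea, ha2⟩) (Sum.inr ⟨m ++ eb, hb2⟩),
      p.length = ea.length + eb.length ∧
      ∀ w ∈ p.support, ∀ b : {l : Str // l.length = r}, w = Sum.inr b →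
        b.val = m ++ ea ∨ b.val = m ++ eb := by
  refine ⟨((downLW 0 m ea hm ha2).reverse.append (downLW 0 m eb hm hb2)), ?_, ?_⟩
  · rw [Walk.length_append, Walk.length_reverse, downLW_length, downLW_length]
  · intro w hw b hwb
    rw [Walk.mem_support_append_iff] at hw
    rcases hw with hw | hw
    · rw [Walk.support_reverse, List.mem_reverse] at hw
      rcases downLW_support _ _ _ _ _ w hw with ⟨a', ha'⟩ | h'
      · rw [hwb] at ha'; simp at ha'
      · rw [hwb] at h'
        have := congrArg str h'; exact Or.inl (by simpa using this)
    · rcases downLW_support _ _ _ _ _ w hw with ⟨a', ha'⟩ | h'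
      · rw [hwb] at ha'; simp at ha'
      · rw [hwb] at h'
        have := congrArg str h'; exact Or.inr (by simpa using this)

lemma exists_walk_leaf_int (i : Fin 2) (a : {l : Str // l.length = r})
    (t : {l : Str // l.length < r}) :
    ∃ p : (GT r).Walk (Sum.inr a) (Sum.inl (i, t)), p.length = D a.val t.val ∧
      ∀ w ∈ p.support, ∀ b : {l : Str // l.length = r}, w = Sum.inr b → b = a := by
  obtain ⟨ea, hea⟩ := lcp_prefix_left a.val t.val
  obtain ⟨et, het⟩ := lcp_prefix_right a.val t.val
  have hm : (lcp a.val t.val).length < r :=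
    lt_of_le_of_lt (lcp_prefix_right a.val t.val).length_le t.2
  have ha2 : (lcp a.val t.val ++ ea).length = r := by rw [hea]; exact a.2
  have ht2 : (lcp a.val t.val ++ et).length < r := by rw [het]; exact t.2
  obtain ⟨p, hl, hs⟩ := walk_split_li i (lcp a.val t.val) ea et hm ha2 ht2
  have e1 : (Sum.inr ⟨lcp a.val t.val ++ ea, ha2⟩ : V r) = Sum.inr a := by
    congr 1; exact Subtype.ext hea
  have e2 : (Sum.inl (i, ⟨lcp a.val t.val ++ et, ht2⟩) : V r) = Sum.inl (i, t) := by
    congr 1; exact Prod.ext rfl (Subtype.ext het)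
  have hD : D a.val t.val = ea.length + et.length := by
    have h1 := congrArg List.length hea
    have h2 := congrArg List.length het
    simp only [List.length_append] at h1 h2
    rw [D]; omega
  refine ⟨p.copy e1 e2, ?_, ?_⟩
  · rw [Walk.length_copy, hl, hD]
  · intro w hw b hwb
    rw [Walk.support_copy] at hw
    exact Subtype.ext ((hs w hw b hwb).trans hea)

lemma exists_walk_leaf_leaf (a b : {l : Str // l.length = r}) (hab : a ≠ b) :
    ∃ p : (GT r).Walk (Sum.inr a) (Sum.inr b), p.length = D a.val b.val ∧
      ∀ w ∈ p.support, ∀ c : {l : Str // l.length = r},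
        w = Sum.inr c → c = a ∨ c = b := by
  obtain ⟨ea, hea⟩ := lcp_prefix_left a.val b.val
  obtain ⟨eb, heb⟩ := lcp_prefix_right a.val b.val
  have hm : (lcp a.val b.val).length < r := by
    rcases lt_or_eq_of_le ((lcp_prefix_left a.val b.val).length_le.trans a.2.le) with h | h
    · exact h
    · exfalso
      have h1 : lcp a.val b.val = a.val :=
        (lcp_prefix_left a.val b.val).eq_of_length (by rw [h, a.2])
      have h2 : lcp a.val b.val = b.val :=
        (lcp_prefix_right a.val b.val).eq_of_length (by rw [h, b.2])
      exact hab (Subtype.ext (h1.symm.trans h2))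
  have ha2 : (lcp a.val b.val ++ ea).length = r := by rw [hea]; exact a.2
  have hb2 : (lcp a.val b.val ++ eb).length = r := by rw [heb]; exact b.2
  obtain ⟨p, hl, hs⟩ := walk_split_ll (lcp a.val b.val) ea eb hm ha2 hb2
  have e1 : (Sum.inr ⟨lcp a.val b.val ++ ea, ha2⟩ : V r) = Sum.inr a := by
    congr 1; exact Subtype.ext hea
  have e2 : (Sum.inr ⟨lcp a.val b.val ++ eb, hb2⟩ : V r) = Sum.inr b := by
    congr 1; exact Subtype.ext heb
  have hD : D a.val b.val = ea.length + eb.length := by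
    have h1 := congrArg List.length hea
    have h2 := congrArg List.length heb
    simp only [List.length_append] at h1 h2
    rw [D]; omega
  refine ⟨p.copy e1 e2, ?_, ?_⟩
  · rw [Walk.length_copy, hl, hD]
  · intro w hw c hwc
    rw [Walk.support_copy] at hw
    rcases hs w hw c hwc with h' | h'
    · exact Or.inl (Subtype.ext (h'.trans hea))
    · exact Or.inr (Subtype.ext (h'.trans heb))

lemma dist_leaf_int (i : Fin 2) (a : {l : Str // l.length = r}) (t : {l : Str // l.length < r}) :
    (GT r).dist (Sum.inr a) (Sum.inl (i, t)) = D a.val t.val := by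
  obtain ⟨p, hl, -⟩ := exists_walk_leaf_int i a t
  refine le_antisymm (hl ▸ SimpleGraph.dist_le p) ?_
  obtain ⟨q, hq⟩ := p.reachable.exists_walk_length_eq_dist
  have := walk_lb q
  simp only [str_inr, str_inl] at this
  omega

lemma dist_int_leaf (i : Fin 2) (a : {l : Str // l.length = r}) (t : {l : Str // l.length < r}) :
    (GT r).dist (Sum.inl (i, t)) (Sum.inr a) = D t.val a.val := by
  rw [SimpleGraph.dist_comm, dist_leaf_int, D_comm]

lemma dist_leaf_leaf (a b : {l : Str // l.length = r}) (hab : a ≠ b) :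
    (GT r).dist (Sum.inr a) (Sum.inr b) = D a.val b.val := by
  obtain ⟨p, hl, -⟩ := exists_walk_leaf_leaf a b hab
  refine le_antisymm (hl ▸ SimpleGraph.dist_le p) ?_
  obtain ⟨q, hq⟩ := p.reachable.exists_walk_length_eq_dist
  have := walk_lb q
  simp only [str_inr] at this
  omega

lemma walk_hits {u v : V r} (p : (GT r).Walk u v) :
    ∀ c₀ : Str, geoMem (str u) (str v) c₀ → ∃ w ∈ p.support, str w = c₀ := by
  induction p with
  | nil =>
    intro c₀ hc
    exact ⟨_, Walk.start_mem_support _, (geoMem_self hc).symm⟩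
  | @cons a b c h q ih =>
    intro c₀ hc
    by_cases hcu : c₀ = str a
    · exact ⟨a, Walk.start_mem_support _, hcu.symm⟩
    · obtain ⟨w, hw, hws⟩ := ih c₀ (geoMem_step (adj_str h) hc hcu)
      exact ⟨w, by rw [Walk.support_cons]; exact List.mem_cons_of_mem _ hw, hws⟩

lemma support_str_mem {u v : V r} (p : (GT r).Walk u v)
    (hl : p.length = D (str u) (str v)) :
    ∀ w ∈ p.support, str w ∈ geoList (str u) (str v) := by
  have hsub : geoList (str u) (str v) ⊆ p.support.map str := by
    intro c hc
    obtain ⟨w, hw, rfl⟩ := walk_hits p c (mem_geoList_iff.mp hc)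
    exact List.mem_map_of_mem hw
  have hperm : (geoList (str u) (str v)).Perm (p.support.map str) :=
    (List.subperm_of_subset geoList_nodup hsub).perm_of_length_le
      (by rw [List.length_map, SimpleGraph.Walk.length_support, hl, geoList_length])
  intro w hw
  exact hperm.mem_iff.mpr (List.mem_map_of_mem hw)

lemma only_inr {u v : V r} (p : (GT r).Walk u v) (hl : p.length = D (str u) (str v))
    (hu : (str u).length < r) :
    ∀ b : {l : Str // l.length = r}, Sum.inr b ∈ p.support → Sum.inr b = v := by
  intro b hb
  have hmem := support_str_mem p hl _ hb
  simp only [str_inr] at hmem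
  obtain ⟨-, h2 | h2⟩ := mem_geoList_iff.mp hmem
  · have := h2.length_le; rw [b.2] at this; omega
  · have hbv : b.val = str v := h2.eq_of_length
      (le_antisymm h2.length_le (by rw [b.2]; exact str_length_le v))
    rcases v with ⟨j, t⟩ | c
    · exfalso; rw [str_inl] at hbv; have := t.2; rw [← hbv, b.2] at this; omega
    · rw [str_inr] at hbv; rw [Subtype.ext hbv]

lemma copy_const {v : V r} :
    ∀ {u} (p : (GT r).Walk u v), p.IsPath →
      (∀ b : {l : Str // l.length = r}, Sum.inr b ∈ p.support → Sum.inr b = v) →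
      ∀ {i : Fin 2} {a : {l : Str // l.length < r}}, u = Sum.inl (i, a) →
      ∀ {j c}, Sum.inl (j, c) ∈ p.support → j = i := by
  intro u p
  induction p with
  | nil =>
    intro _ _ i a hu j c hm
    subst hu
    simp only [Walk.support_nil, List.mem_singleton] at hm
    simp at hm
    exact hm.1
  | @cons u' w v' h q ih =>
    intro hp hinr i a hu j c hm
    subst hu
    rw [Walk.support_cons, List.mem_cons] at hm
    rcases hm with hm | hm
    · simp at hm; exact hm.1
    · rcases w with ⟨i', a'⟩ | b
      · have hii : i = i' := adj_copy h
        exact (ih hp.of_cons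
          (fun b hb => hinr b (by rw [Walk.support_cons]; exact List.mem_cons_of_mem _ hb))
          rfl hm).trans hii.symm
      · have hbmem : Sum.inr b ∈ (Walk.cons h q).support := by
          rw [Walk.support_cons]
          exact List.mem_cons_of_mem _ (Walk.start_mem_support _)
        have hbv : Sum.inr b = v' := hinr b hbmem
        subst hbv
        have hq : q = Walk.nil := (Walk.isPath_iff_eq_nil (p := q)).mp hp.of_cons
        subst hq
        simp at hm

lemma visible_block {S : Set (V r)} {u v : V r} (hvis : isVisible (GT r) S u v)
    (hd : (GT r).dist u v = D (str u) (str v)) {i : Fin 2} {a : {l : Str // l.length < r}}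
    (hu : u = Sum.inl (i, a))
    {c : Str} (hgm : geoMem (str u) (str v) c) (hc1 : c ≠ str u) (hc2 : c ≠ str v)
    (hcr : c.length < r)
    (hcS : Sum.inl (i, (⟨c, hcr⟩ : {l : Str // l.length < r})) ∈ S) : False := by
  obtain ⟨p, hp, hl, havoid⟩ := hvis
  rw [hd] at hl
  obtain ⟨w, hw, hws⟩ := walk_hits p c hgm
  rcases w with ⟨j, c'⟩ | b
  · have hc' : c'.val = c := hws
    have hji : j = i := copy_const p hp
      (only_inr p hl (by rw [hu, str_inl]; exact a.2)) hu hw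
    subst hji
    have hwS : Sum.inl (j, c') ∈ S := by
      rw [show c' = ⟨c, hcr⟩ from Subtype.ext hc']; exact hcS
    rcases havoid _ hw hwS with h' | h'
    · exact hc1 (by rw [← hws, h'])
    · exact hc2 (by rw [← hws, h'])
  · have : b.val = c := hws
    rw [← this] at hcr
    rw [b.2] at hcr
    omega

lemma visible_block2 {S : Set (V r)} {u v : V r} (hvis : isVisible (GT r) S u v)
    (hd : (GT r).dist u v = D (str u) (str v))
    {c : Str} (hgm : geoMem (str u) (str v) c) (hc1 : c ≠ str u) (hc2 : c ≠ str v)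
    (hcr : c.length < r)
    (hS0 : Sum.inl ((0 : Fin 2), (⟨c, hcr⟩ : {l : Str // l.length < r})) ∈ S)
    (hS1 : Sum.inl ((1 : Fin 2), (⟨c, hcr⟩ : {l : Str // l.length < r})) ∈ S) : False := by
  obtain ⟨p, hp, hl, havoid⟩ := hvis
  rw [hd] at hl
  obtain ⟨w, hw, hws⟩ := walk_hits p c hgm
  rcases w with ⟨j, c'⟩ | b
  · have hc' : c'.val = c := hws
    have hwS : Sum.inl (j, c') ∈ S := by
      rw [show c' = ⟨c, hcr⟩ from Subtype.ext hc']
      fin_cases j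
      · exact hS0
      · exact hS1
    rcases havoid _ hw hwS with h' | h'
    · exact hc1 (by rw [← hws, h'])
    · exact hc2 (by rw [← hws, h'])
  · have : b.val = c := hws
    rw [← this] at hcr
    rw [b.2] at hcr
    omega

lemma isVisible_symm {V' : Type*} {G : SimpleGraph V'} {S : Set V'} {u v : V'}
    (h : isVisible G S u v) : isVisible G S v u := by
  obtain ⟨p, hp, hl, ha⟩ := h
  refine ⟨p.reverse, hp.reverse, by rw [Walk.length_reverse, hl, SimpleGraph.dist_comm],
    fun w hw hS => ?_⟩
  rw [Walk.support_reverse, List.mem_reverse] at hw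
  exact (ha w hw hS).symm


section Helpers
variable (r : ℕ)

def padr (c : Str) : Str := c ++ List.replicate (r - c.length) 0

lemma padr_length {c : Str} (h : c.length ≤ r) : (padr r c).length = r := by
  simp [padr]; omega

lemma padr_prefix (c : Str) : c <+: padr r c := List.prefix_append _ _

end Helpers

def flip2 : Fin 2 → Fin 2 := fun x => 1 - x

lemma flip2_ne (x : Fin 2) : flip2 x ≠ x := by fin_cases x <;> decide

lemma prefix_getElem {a b : Str} (h : a <+: b) {n : ℕ} (hn : n < a.length) :
    b[n]'(lt_of_lt_of_le hn h.length_le) = a[n]'hn := by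
  obtain ⟨t, rfl⟩ := h
  exact List.getElem_append_left hn

lemma leaves_outer (r : ℕ) : isOuterMVSet (GT r) (quasiLeaves r 2 2) := by
  constructor
  · rintro u ⟨a, rfl⟩ v ⟨b, rfl⟩
    by_cases hab : a = b
    · subst hab
      exact ⟨Walk.nil, Walk.IsPath.nil, by rw [Walk.length_nil, SimpleGraph.dist_self],
        by simp⟩
    · obtain ⟨p, hl, hs⟩ := exists_walk_leaf_leaf a b hab
      have hd := dist_leaf_leaf a b hab
      have h1 : p.bypass.length ≤ p.length := Walk.length_bypass_le p
      have h2 := SimpleGraph.dist_le p.bypass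
      refine ⟨p.bypass, Walk.bypass_isPath p, by omega, ?_⟩
      intro w hw hwL
      obtain ⟨c, rfl⟩ := hwL
      rcases hs _ (Walk.support_bypass_subset p hw) c rfl with rfl | rfl
      · exact Or.inl rfl
      · exact Or.inr rfl
  · rintro u ⟨a, rfl⟩ v hv
    rcases v with ⟨i, t⟩ | c
    · obtain ⟨p, hl, hs⟩ := exists_walk_leaf_int i a t
      have hd := dist_leaf_int i a t
      have h1 : p.bypass.length ≤ p.length := Walk.length_bypass_le p
      have h2 := SimpleGraph.dist_le p.bypass
      refine ⟨p.bypass, Walk.bypass_isPath p, by omega, ?_⟩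
      intro w hw hwL
      obtain ⟨c, rfl⟩ := hwL
      rcases hs _ (Walk.support_bypass_subset p hw) c rfl with rfl
      exact Or.inl rfl
    · exact absurd ⟨c, rfl⟩ hv

instance {r : ℕ} : Finite {l : Str // l.length < r} := by
  refine Finite.of_injective (fun l => (fun k : Fin r => l.val[k.val]?)) ?_
  intro l1 l2 h
  refine Subtype.ext (List.ext_getElem? fun n => ?_)
  by_cases hn : n < r
  · exact congrFun h ⟨n, hn⟩
  · rw [List.getElem?_eq_none (by have := l1.2; omega),
      List.getElem?_eq_none (by have := l2.2; omega)]

instance {r : ℕ} : Finite {l : Str // l.length = r} := by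
  refine Finite.of_injective (fun l => (fun k : Fin r => l.val[k.val]?)) ?_
  intro l1 l2 h
  refine Subtype.ext (List.ext_getElem? fun n => ?_)
  by_cases hn : n < r
  · exact congrFun h ⟨n, hn⟩
  · rw [List.getElem?_eq_none (by have := l1.2; omega),
      List.getElem?_eq_none (by have := l2.2; omega)]


lemma ncard_quasiLeaves (r : ℕ) : (quasiLeaves r 2 2).ncard = 2 ^ r := by
  have h1 : quasiLeaves r 2 2 = Set.range (Sum.inr : _ → V r) := by
    ext x
    simp only [quasiLeaves, Set.mem_setOf_eq, Set.mem_range]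
    exact exists_congr fun l => eq_comm
  rw [h1, ← Nat.card_coe_set_eq, Nat.card_range_of_injective Sum.inr_injective]
  have e : {l : Str // l.length = r} ≃ (Fin r → Fin 2) :=
    { toFun := fun l k => l.val[k.val]'(by rw [l.2]; exact k.2)
      invFun := fun f => ⟨List.ofFn f, by simp⟩
      left_inv := fun l => Subtype.ext (List.ext_getElem (by simp [l.2])
        (fun n h1 h2 => by simp))
      right_inv := fun f => funext fun k => by simp }
  rw [Nat.card_congr e]
  simp [Nat.card_eq_fintype_card]


lemma ne_of_length_lt_eq {a b : Str} {r : ℕ} (ha : a.length < r) (hb : b.length = r) :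
    a ≠ b := fun h => by rw [h, hb] at ha; omega

lemma onePerCopy {r : ℕ} {S : Set (V r)} (hS : isOuterMVSet (GT r) S) {i : Fin 2}
    {s t : {l : Str // l.length < r}} (hx : Sum.inl (i, s) ∈ S)
    (hy : Sum.inl (i, t) ∈ S) : s = t := by
  by_contra hne
  have hne' : t.val ≠ s.val := fun h => hne (Subtype.ext h.symm)
  -- construct a leaf l such that t.val is strictly inside the geodesic from s to l
  suffices h : ∃ l : {l : Str // l.length = r}, geoMem s.val l.val t.val by
    obtain ⟨l, hgm⟩ := h
    have hvis : isVisible (GT r) S (Sum.inl (i, s)) (Sum.inr l) := by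
      by_cases hl : Sum.inr l ∈ S
      · exact hS.1 _ hx _ hl
      · exact hS.2 _ hx _ hl
    exact visible_block hvis (dist_int_leaf i l s) rfl hgm hne'
      (ne_of_length_lt_eq t.2 l.2) t.2 hy
  by_cases hts : t.val <+: s.val
  · have hlt : t.val.length < s.val.length :=
      lt_of_le_of_ne hts.length_le (fun h => hne' (hts.eq_of_length h))
    have hlr : (t.val ++ [flip2 (s.val[t.val.length]'hlt)]).length ≤ r := by
      have := s.2; simp; omega
    refine ⟨⟨padr r (t.val ++ [flip2 (s.val[t.val.length]'hlt)]), padr_length r hlr⟩, ?_, Or.inl hts⟩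
    -- lcp s.val (padr ...) <+: t.val
    have h1 : lcp s.val (padr r (t.val ++ [flip2 (s.val[t.val.length]'hlt)])) <+: s.val :=
      lcp_prefix_left _ _
    rcases List.prefix_or_prefix_of_prefix h1 hts with hh | hh
    · exact hh
    · by_cases heq : t.val = lcp s.val (padr r (t.val ++ [flip2 (s.val[t.val.length]'hlt)]))
      · exact heq ▸ List.prefix_rfl
      · exfalso
        have hlt2 : t.val.length <
            (lcp s.val (padr r (t.val ++ [flip2 (s.val[t.val.length]'hlt)]))).length :=
          lt_of_le_of_ne hh.length_le (fun hl2 => heq (hh.eq_of_length hl2))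
        have e1 := prefix_getElem h1 hlt2
        have e2 := prefix_getElem
          (lcp_prefix_right s.val (padr r (t.val ++ [flip2 (s.val[t.val.length]'hlt)]))) hlt2
        -- e1 : s.val[t.len] = lcp[t.len]; e2 : padr[t.len] = lcp[t.len]
        have e4 : (padr r (t.val ++ [flip2 (s.val[t.val.length]'hlt)]))[t.val.length]'
            (lt_of_lt_of_le hlt2 ((lcp_prefix_right _ _).length_le)) =
            flip2 (s.val[t.val.length]'hlt) := by
          have hpre2 : (t.val ++ [flip2 (s.val[t.val.length]'hlt)]) <+:
              padr r (t.val ++ [flip2 (s.val[t.val.length]'hlt)]) := padr_prefix r _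
          rw [prefix_getElem hpre2 (by simp)]
          simp
        exact flip2_ne _ ((e4.symm.trans e2).trans e1.symm)
  · have hlr : t.val.length ≤ r := t.2.le
    refine ⟨⟨padr r t.val, padr_length r hlr⟩, ?_, Or.inr (padr_prefix r t.val)⟩
    have h1 : lcp s.val (padr r t.val) <+: padr r t.val := lcp_prefix_right _ _
    rcases List.prefix_or_prefix_of_prefix h1 (padr_prefix r t.val) with hh | hh
    · exact hh
    · exact absurd (hh.trans (lcp_prefix_left _ _)) hts

lemma lcp_singleton_ne {x : Fin 2} {b : Str} (hb : 0 < b.length) (hne : x ≠ b[0]'hb) :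
    lcp [x] b = [] := by
  cases b with
  | nil => simp at hb
  | cons z zs =>
    simp only [List.getElem_cons_zero] at hne
    simp [lcp, hne]

lemma noDescLeaf {r : ℕ} (hr : 2 ≤ r) {S : Set (V r)} (hS : isOuterMVSet (GT r) S)
    {i : Fin 2} {s : {l : Str // l.length < r}} (hx : Sum.inl (i, s) ∈ S)
    (u : {l : Str // l.length = r}) (hpre : s.val <+: u.val) : Sum.inr u ∉ S := by
  intro huS
  have hu0 : 0 < u.val.length := by rw [u.2]; omega
  have ht : ([flip2 (u.val[0]'hu0)] : Str).length < r := by simp; omega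
  have hvnotS : Sum.inl (i, (⟨[flip2 (u.val[0]'hu0)], ht⟩ : {l : Str // l.length < r})) ∉ S := by
    intro hvS
    have heq := onePerCopy hS hx hvS
    have hs0 : s.val = [flip2 (u.val[0]'hu0)] := congrArg Subtype.val heq
    have h1 : 0 < s.val.length := by rw [hs0]; simp
    have h2 := prefix_getElem hpre h1
    have h3 : s.val[0]'h1 = flip2 (u.val[0]'hu0) := by
      have := List.getElem_of_eq hs0 (i := 0) h1
      simpa using this
    rw [h3] at h2
    exact flip2_ne _ h2.symm
  have hvis := isVisible_symm (hS.2 _ huS _ hvnotS)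
  refine visible_block hvis (dist_int_leaf i u ⟨[flip2 (u.val[0]'hu0)], ht⟩) rfl
    ?_ ?_ (ne_of_length_lt_eq s.2 u.2) s.2 hx
  · -- geoMem [flip2 u0] u.val s.val
    refine ⟨?_, Or.inr hpre⟩
    simp only [str_inl, str_inr]
    rw [lcp_singleton_ne hu0 (flip2_ne _)]
    exact List.nil_prefix
  · -- s.val ≠ [flip2 u0]
    intro h
    simp only [str_inl] at h
    have h1 : 0 < s.val.length := by rw [h]; simp
    have h2 := prefix_getElem hpre h1
    have h3 : s.val[0]'h1 = flip2 (u.val[0]'hu0) := by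
      have := List.getElem_of_eq h h1
      simpa using this
    rw [h3] at h2
    exact flip2_ne _ h2.symm

lemma bothBlock {r : ℕ} (hr : 2 ≤ r) {S : Set (V r)} (hS : isOuterMVSet (GT r) S)
    {i j : Fin 2} {s t : {l : Str // l.length < r}} (hij : i ≠ j) (hst : s.val = t.val)
    (hx : Sum.inl (i, s) ∈ S) (hy : Sum.inl (j, t) ∈ S) :
    ∀ u : {l : Str // l.length = r}, Sum.inr u ∉ S := by
  intro u huS
  have hnd : ¬ s.val <+: u.val := fun h => noDescLeaf hr hS hx u h huS
  have hc2r : (s.val ++ [(0 : Fin 2)]).length ≤ r := by have := s.2; simp; omega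
  have hcvlen : (padr r (s.val ++ [(0 : Fin 2)])).length = r := padr_length r hc2r
  have hscv : s.val <+: padr r (s.val ++ [(0 : Fin 2)]) :=
    (List.prefix_append _ _).trans (padr_prefix r _)
  have hcS : Sum.inr (⟨padr r (s.val ++ [(0 : Fin 2)]), hcvlen⟩ : {l : Str // l.length = r}) ∉ S :=
    noDescLeaf hr hS hx _ hscv
  have hcu : u ≠ ⟨padr r (s.val ++ [(0 : Fin 2)]), hcvlen⟩ := by
    intro h
    exact hnd (by rw [h]; exact hscv)
  have hvis := hS.2 _ huS _ hcS
  have hxx : Sum.inl (i, (⟨s.val, s.2⟩ : {l : Str // l.length < r})) ∈ S := hx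
  have hyy : Sum.inl (j, (⟨s.val, s.2⟩ : {l : Str // l.length < r})) ∈ S := by
    have h : t = ⟨s.val, s.2⟩ := Subtype.ext hst.symm
    rw [← h]; exact hy
  have hboth : Sum.inl ((0 : Fin 2), (⟨s.val, s.2⟩ : {l : Str // l.length < r})) ∈ S ∧
      Sum.inl ((1 : Fin 2), (⟨s.val, s.2⟩ : {l : Str // l.length < r})) ∈ S := by
    fin_cases i <;> fin_cases j
    · exact absurd rfl hij
    · exact ⟨hxx, hyy⟩
    · exact ⟨hyy, hxx⟩
    · exact absurd rfl hij
  refine visible_block2 hvis (dist_leaf_leaf u _ hcu) ?_ ?_ ?_ s.2 hboth.1 hboth.2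
  · -- geoMem u.val (padr ...) s.val
    refine ⟨?_, Or.inr hscv⟩
    have h1 : lcp u.val (padr r (s.val ++ [(0 : Fin 2)])) <+: padr r (s.val ++ [(0 : Fin 2)]) :=
      lcp_prefix_right _ _
    rcases List.prefix_or_prefix_of_prefix h1 hscv with hh | hh
    · exact hh
    · exact absurd (hh.trans (lcp_prefix_left _ _)) hnd
  · intro h
    simp only [str_inr] at h
    exact hnd (by rw [h])
  · intro h
    have h2 := congrArg List.length h
    simp only [str_inr] at h2
    rw [hcvlen] at h2
    have := s.2
    omega


lemma fin2_other {i' i : Fin 2} (h : i' ≠ i) : i' = flip2 i := by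
  revert h; fin_cases i' <;> fin_cases i <;> decide

lemma pad_get {r : ℕ} {s e : Str} {k : ℕ} (hk : k < e.length) (hle : (s ++ e).length ≤ r) :
    (padr r (s ++ e))[s.length + k]'
      (by rw [padr_length r hle]; simp at hle; omega) = e[k]'hk := by
  have h1 : s.length + k < (s ++ e).length := by simp; omega
  rw [prefix_getElem (padr_prefix r (s ++ e)) h1]
  rw [List.getElem_append_right (by omega)]
  congr 1
  omega

lemma three_missing {r : ℕ} (hr : 2 ≤ r) {S : Set (V r)} (hS : isOuterMVSet (GT r) S)
    {i j : Fin 2} {s t : {l : Str // l.length < r}} (hij : i ≠ j)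
    (hx : Sum.inl (i, s) ∈ S) (hy : Sum.inl (j, t) ∈ S) (hst : s.val ≠ t.val)
    (hlen : s.val.length ≤ t.val.length) :
    ∃ c0 c1 c2 : {l : Str // l.length = r}, c0 ≠ c1 ∧ c0 ≠ c2 ∧ c1 ≠ c2 ∧
      Sum.inr c0 ∉ S ∧ Sum.inr c1 ∉ S ∧ Sum.inr c2 ∉ S := by
  by_cases hsl : s.val.length + 2 ≤ r
  · have hle0 : (s.val ++ [(0:Fin 2), 0]).length ≤ r := by simp; omega
    have hle1 : (s.val ++ [(0:Fin 2), 1]).length ≤ r := by simp; omega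
    have hle2 : (s.val ++ [(1:Fin 2), 0]).length ≤ r := by simp; omega
    refine ⟨⟨padr r (s.val ++ [0, 0]), padr_length r hle0⟩,
      ⟨padr r (s.val ++ [0, 1]), padr_length r hle1⟩,
      ⟨padr r (s.val ++ [1, 0]), padr_length r hle2⟩, ?_, ?_, ?_, ?_, ?_, ?_⟩
    · intro h
      have hv := congrArg Subtype.val h
      have := List.getElem_of_eq hv (i := s.val.length + 1)
        (by rw [padr_length r hle0]; omega)
      rw [pad_get (by norm_num) hle0, pad_get (by norm_num) hle1] at this
      exact absurd this (by decide)
    · intro h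
      have hv := congrArg Subtype.val h
      have := List.getElem_of_eq hv (i := s.val.length + 0)
        (by rw [padr_length r hle0]; omega)
      rw [pad_get (by norm_num) hle0, pad_get (by norm_num) hle2] at this
      exact absurd this (by decide)
    · intro h
      have hv := congrArg Subtype.val h
      have := List.getElem_of_eq hv (i := s.val.length + 0)
        (by rw [padr_length r hle1]; omega)
      rw [pad_get (by norm_num) hle1, pad_get (by norm_num) hle2] at this
      exact absurd this (by decide)
    · exact noDescLeaf hr hS hx _ ((List.prefix_append _ _).trans (padr_prefix r _))
    · exact noDescLeaf hr hS hx _ ((List.prefix_append _ _).trans (padr_prefix r _))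
    · exact noDescLeaf hr hS hx _ ((List.prefix_append _ _).trans (padr_prefix r _))
  · have h1 : s.val.length = r - 1 := by have := s.2; omega
    have h2 : t.val.length = r - 1 := by have := t.2; omega
    have hl0 : (s.val ++ [(0:Fin 2)]).length = r := by simp; omega
    have hl1 : (s.val ++ [(1:Fin 2)]).length = r := by simp; omega
    have hl2 : (t.val ++ [(0:Fin 2)]).length = r := by simp; omega
    refine ⟨⟨s.val ++ [0], hl0⟩, ⟨s.val ++ [1], hl1⟩, ⟨t.val ++ [0], hl2⟩,
      ?_, ?_, ?_, ?_, ?_, ?_⟩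
    · intro h
      have hv := congrArg Subtype.val h
      have := (List.append_inj hv rfl).2
      simp at this
    · intro h
      have hv := congrArg Subtype.val h
      exact hst (List.append_inj hv (by omega)).1
    · intro h
      have hv := congrArg Subtype.val h
      exact hst (List.append_inj hv (by omega)).1
    · exact noDescLeaf hr hS hx _ (List.prefix_append _ _)
    · exact noDescLeaf hr hS hx _ (List.prefix_append _ _)
    · exact noDescLeaf hr hS hy _ (List.prefix_append _ _)

lemma main_bound {r : ℕ} (hr : 2 ≤ r) {S : Set (V r)} (hS : isOuterMVSet (GT r) S)
    (hne : ∃ i s, Sum.inl (i, s) ∈ S) : S.ncard + 1 ≤ 2 ^ r := by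
  classical
  obtain ⟨i, s, hx⟩ := hne
  have hpow : 4 ≤ 2 ^ r := by
    calc (4:ℕ) = 2 ^ 2 := rfl
    _ ≤ 2 ^ r := Nat.pow_le_pow_right (by norm_num) hr
  have hLcard : (quasiLeaves r 2 2).ncard = 2 ^ r := ncard_quasiLeaves r
  by_cases hother : ∃ t : {l : Str // l.length < r}, Sum.inl (flip2 i, t) ∈ S
  · obtain ⟨t, hy⟩ := hother
    have hij : i ≠ flip2 i := (flip2_ne i).symm
    by_cases hst : s.val = t.val
    · -- both copies blocked: no leaves in S at all
      have hnoleaf := bothBlock hr hS hij hst hx hy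
      have hsub : S ⊆ {Sum.inl (i, s), Sum.inl (flip2 i, t)} := by
        intro w hw
        rcases w with ⟨i', t'⟩ | b
        · by_cases hii : i' = i
          · subst hii
            rw [onePerCopy hS hw hx]
            exact Set.mem_insert _ _
          · rw [fin2_other hii] at hw ⊢
            rw [onePerCopy hS hw hy]
            exact Set.mem_insert_of_mem _ rfl
        · exact absurd hw (hnoleaf b)
      have h2 : S.ncard ≤ 2 := by
        refine le_trans (Set.ncard_le_ncard hsub (Set.toFinite _)) ?_
        refine le_trans (Set.ncard_insert_le _ _) ?_
        simp
      omega
    · -- three missing leaves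
      obtain ⟨c0, c1, c2, d01, d02, d12, m0, m1, m2⟩ :
          ∃ c0 c1 c2 : {l : Str // l.length = r}, c0 ≠ c1 ∧ c0 ≠ c2 ∧ c1 ≠ c2 ∧
            Sum.inr c0 ∉ S ∧ Sum.inr c1 ∉ S ∧ Sum.inr c2 ∉ S := by
        rcases le_or_gt s.val.length t.val.length with hl | hl
        · exact three_missing hr hS hij hx hy hst hl
        · obtain ⟨c0, c1, c2, d01, d02, d12, m0, m1, m2⟩ :=
            three_missing hr hS hij.symm hy hx (fun h => hst h.symm) hl.le
          exact ⟨c0, c1, c2, d01, d02, d12, m0, m1, m2⟩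
      have hsub : S ⊆ {Sum.inl (i, s), Sum.inl (flip2 i, t)} ∪
          (quasiLeaves r 2 2 \ {Sum.inr c0, Sum.inr c1, Sum.inr c2}) := by
        intro w hw
        rcases w with ⟨i', t'⟩ | b
        · left
          by_cases hii : i' = i
          · subst hii
            rw [onePerCopy hS hw hx]
            exact Set.mem_insert _ _
          · rw [fin2_other hii] at hw ⊢
            rw [onePerCopy hS hw hy]
            exact Set.mem_insert_of_mem _ rfl
        · refine Or.inr ⟨⟨b, rfl⟩, ?_⟩
          intro hmem
          simp only [Set.mem_insert_iff, Set.mem_singleton_iff, Sum.inr.injEq] at hmem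
          rcases hmem with rfl | rfl | rfl
          exacts [m0 hw, m1 hw, m2 hw]
      have htriple : ({Sum.inr c0, Sum.inr c1, Sum.inr c2} : Set (V r)).ncard = 3 := by
        rw [Set.ncard_insert_of_notMem (by simp [d01, d02]) (Set.toFinite _),
          Set.ncard_pair (by simp [d12])]
      have htsub : ({Sum.inr c0, Sum.inr c1, Sum.inr c2} : Set (V r)) ⊆ quasiLeaves r 2 2 := by
        rintro w (rfl | rfl | rfl) <;> exact ⟨_, rfl⟩
      have hdiff : (quasiLeaves r 2 2 \ {Sum.inr c0, Sum.inr c1, Sum.inr c2}).ncard =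
          2 ^ r - 3 := by
        rw [Set.ncard_diff htsub (Set.toFinite _), htriple, hLcard]
      have hcard : S.ncard ≤ 2 + (2 ^ r - 3) := by
        refine le_trans (Set.ncard_le_ncard hsub (Set.toFinite _)) ?_
        refine le_trans (Set.ncard_union_le _ _) ?_
        rw [hdiff]
        have : ({Sum.inl (i, s), Sum.inl (flip2 i, t)} : Set (V r)).ncard ≤ 2 := by
          refine le_trans (Set.ncard_insert_le _ _) ?_
          simp
        omega
      omega
  · -- only one internal vertex in S
    have hle0 : (s.val ++ [(0:Fin 2)]).length ≤ r := by have := s.2; simp; omega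
    have hle1 : (s.val ++ [(1:Fin 2)]).length ≤ r := by have := s.2; simp; omega
    set c0 : {l : Str // l.length = r} := ⟨padr r (s.val ++ [0]), padr_length r hle0⟩
    set c1 : {l : Str // l.length = r} := ⟨padr r (s.val ++ [1]), padr_length r hle1⟩
    have d01 : c0 ≠ c1 := by
      intro h
      have hv := congrArg Subtype.val h
      have h0 : (s.val ++ [(0:Fin 2)]) = s.val ++ [(0:Fin 2)] ++ [] := by simp
      have := List.getElem_of_eq hv (i := s.val.length + 0)
        (by rw [padr_length r hle0]; have := s.2; omega)
      rw [pad_get (by norm_num) hle0, pad_get (by norm_num) hle1] at this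
      exact absurd this (by decide)
    have m0 : Sum.inr c0 ∉ S := noDescLeaf hr hS hx _ ((List.prefix_append _ _).trans (padr_prefix r _))
    have m1 : Sum.inr c1 ∉ S := noDescLeaf hr hS hx _ ((List.prefix_append _ _).trans (padr_prefix r _))
    have hsub : S ⊆ {Sum.inl (i, s)} ∪
        (quasiLeaves r 2 2 \ {Sum.inr c0, Sum.inr c1}) := by
      intro w hw
      rcases w with ⟨i', t'⟩ | b
      · left
        by_cases hii : i' = i
        · subst hii
          rw [onePerCopy hS hw hx]
          rfl
        · rw [fin2_other hii] at hw
          exact absurd ⟨t', hw⟩ hother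
      · refine Or.inr ⟨⟨b, rfl⟩, ?_⟩
        intro hmem
        simp only [Set.mem_insert_iff, Set.mem_singleton_iff, Sum.inr.injEq] at hmem
        rcases hmem with rfl | rfl
        exacts [m0 hw, m1 hw]
    have hpair : ({Sum.inr c0, Sum.inr c1} : Set (V r)).ncard = 2 :=
      Set.ncard_pair (by simp [d01])
    have htsub : ({Sum.inr c0, Sum.inr c1} : Set (V r)) ⊆ quasiLeaves r 2 2 := by
      rintro w (rfl | rfl) <;> exact ⟨_, rfl⟩
    have hdiff : (quasiLeaves r 2 2 \ {Sum.inr c0, Sum.inr c1}).ncard = 2 ^ r - 2 := by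
      rw [Set.ncard_diff htsub (Set.toFinite _), hpair, hLcard]
    have hcard : S.ncard ≤ 1 + (2 ^ r - 2) := by
      refine le_trans (Set.ncard_le_ncard hsub (Set.toFinite _)) ?_
      refine le_trans (Set.ncard_union_le _ _) ?_
      rw [hdiff, Set.ncard_singleton]
    omega

end GTaux

theorem stmt7 (r : ℕ) (hr : 2 ≤ r) :
    IsGreatest {k : ℕ | ∃ S : Set (gluedVert r 2 2),
      isOuterMVSet (gluedTree r 2 2) S ∧ S.ncard = k} (2 ^ r) ∧
    ∀ S : Set (gluedVert r 2 2),
      isOuterMVSet (gluedTree r 2 2) S → S.ncard = 2 ^ r → S = quasiLeaves r 2 2 := by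
  constructor
  · constructor
    · exact ⟨quasiLeaves r 2 2, GTaux.leaves_outer r, GTaux.ncard_quasiLeaves r⟩
    · rintro k ⟨S, hS, rfl⟩
      by_cases hne : ∃ i s, Sum.inl (i, s) ∈ S
      · have := GTaux.main_bound hr hS hne
        omega
      · have hsub : S ⊆ quasiLeaves r 2 2 := by
          intro w hw
          rcases w with ⟨i, s⟩ | b
          · exact absurd ⟨i, s, hw⟩ hne
          · exact ⟨b, rfl⟩
        calc S.ncard ≤ (quasiLeaves r 2 2).ncard :=
              Set.ncard_le_ncard hsub (Set.toFinite _)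
          _ = 2 ^ r := GTaux.ncard_quasiLeaves r
  · intro S hS hcard
    by_cases hne : ∃ i s, Sum.inl (i, s) ∈ S
    · exfalso
      have := GTaux.main_bound hr hS hne
      omega
    · have hsub : S ⊆ quasiLeaves r 2 2 := by
        intro w hw
        rcases w with ⟨i, s⟩ | b
        · exact absurd ⟨i, s, hw⟩ hne
        · exact ⟨b, rfl⟩
      exact Set.eq_of_subset_of_ncard_le hsub
        (by rw [hcard, GTaux.ncard_quasiLeaves r]) (Set.toFinite _)
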